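/- Suppose nonnegative reals (v_k)_{2 ≤ k ≤ K} satisfy v_2 ≤ n^2 and v_{k+1} ≤ (k/(n-k)) v_k + 6 n^2/(β^2 k^2) for 2 ≤ k ≤ K-1, where K = (1-β)n/2 and 0 < β < 1. Then there exists a constant c_β depending only on β such that v_{k+1} ≤ c_β n^2/k^2 for all 2 ≤ k ≤ K-1. -/

import Mathlib

set_option maxHeartbeats 4000000


/-- If nonnegative reals `(v_k)` satisfy `v_2 ≤ n²` and
`v_{k+1} ≤ (k/(n-k)) v_k + 6n²/(β²k²)` for `2 ≤ k ≤ K-1` with `K = ⌊(1-β)n/2⌋`, `0 < β < 1`,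
then there is a constant `c_β` depending only on `β` with `v_{k+1} ≤ c_β n²/k²` for all
`2 ≤ k ≤ K-1`. -/
theorem variance_recursion (β : ℝ) (hβ0 : 0 < β) (hβ1 : β < 1) :
    ∃ c : ℝ, ∀ (n : ℕ), 0 < n → ∀ v : ℕ → ℝ,
      (∀ k, 0 ≤ v k) →
      v 2 ≤ (n : ℝ) ^ 2 →
      (∀ k : ℕ, 2 ≤ k → k ≤ ⌊(1 - β) * (n : ℝ) / 2⌋₊ - 1 →
        v (k + 1) ≤ ((k : ℝ) / ((n : ℝ) - (k : ℝ))) * v k + 6 * (n : ℝ) ^ 2 / (β ^ 2 * (k : ℝ) ^ 2)) →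
      ∀ k : ℕ, 2 ≤ k → k ≤ ⌊(1 - β) * (n : ℝ) / 2⌋₊ - 1 →
        v (k + 1) ≤ c * (n : ℝ) ^ 2 / (k : ℝ) ^ 2 := by
  have hβ1' : (0:ℝ) < 1 + β := by linarith
  obtain ⟨k0, hk0def⟩ : ∃ k0 : ℕ, k0 = ⌈(3:ℝ)/β⌉₊ + 2 := ⟨_, rfl⟩
  obtain ⟨δ, hδdef⟩ : ∃ δ : ℝ, δ = β / (1 + β) := ⟨_, rfl⟩
  have hδ0 : 0 < δ := hδdef ▸ div_pos hβ0 hβ1'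
  have hk05 : 5 ≤ k0 := by
    have h2 : (2:ℕ) < ⌈(3:ℝ)/β⌉₊ := by
      rw [Nat.lt_ceil]
      push_cast
      rw [lt_div_iff₀ hβ0]
      nlinarith
    rw [hk0def]; omega
  obtain ⟨c, hcdef⟩ : ∃ c : ℝ, c = (k0:ℝ)^2 * (1 + 2*(k0:ℝ)/β^2) + 6/(β^2*δ) := ⟨_, rfl⟩
  have hc0 : 0 ≤ c := by rw [hcdef]; positivity
  have hc1 : (k0:ℝ)^2 * (1 + 2*(k0:ℝ)/β^2) ≤ c := by
    rw [hcdef]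
    have : (0:ℝ) ≤ 6/(β^2*δ) := by positivity
    linarith
  have hc2 : 6/β^2 ≤ δ * c := by
    have key : δ * (6/(β^2*δ)) = 6/β^2 := by
      field_simp
    have h0 : 0 ≤ δ * ((k0:ℝ)^2 * (1 + 2*(k0:ℝ)/β^2)) := by positivity
    rw [hcdef]
    rw [mul_add]
    linarith [key.ge]
  refine ⟨c, ?_⟩
  intro n hn v hv h2 hrec
  obtain ⟨K, hKdef⟩ : ∃ K : ℕ, K = ⌊(1 - β) * (n : ℝ) / 2⌋₊ := ⟨_, rfl⟩
  rw [← hKdef] at hrec ⊢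
  have hn0 : (0:ℝ) ≤ (n:ℝ) := Nat.cast_nonneg n
  have hn2 : (0:ℝ) ≤ (n:ℝ)^2 := by positivity
  have hKle : (K:ℝ) ≤ (1 - β) * (n:ℝ) / 2 := by
    rw [hKdef]
    apply Nat.floor_le
    nlinarith
  -- basic facts about k in range
  have hfrac : ∀ k : ℕ, 2 ≤ k → k ≤ K - 1 →
      (0:ℝ) < (n:ℝ) - (k:ℝ) ∧ (k:ℝ) / ((n:ℝ) - (k:ℝ)) ≤ (1-β)/(1+β) := by
    intro k hk2 hkK
    have hk1 : k ≤ K := by omega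
    have hkr : (k:ℝ) ≤ (K:ℝ) := by exact_mod_cast hk1
    have hkb : (k:ℝ) ≤ (1 - β) * (n:ℝ) / 2 := le_trans hkr hKle
    have hnn : (1:ℝ) ≤ (n:ℝ) := by exact_mod_cast hn
    have hpos : (0:ℝ) < (n:ℝ) - (k:ℝ) := by nlinarith
    refine ⟨hpos, ?_⟩
    rw [div_le_div_iff₀ hpos hβ1']
    nlinarith
  -- auxiliary linear-growth bound
  have haux : ∀ k : ℕ, 2 ≤ k → k ≤ K - 1 →
      v (k+1) ≤ (n:ℝ)^2 * (1 + 2*((k:ℝ)+1)/β^2) := by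
    intro k hk2
    induction k, hk2 using Nat.le_induction with
    | base =>
      intro hK
      have hr := hrec 2 le_rfl hK
      obtain ⟨hpos, hle⟩ := hfrac 2 le_rfl hK
      push_cast at hr hle hpos ⊢
      have hf1 : (2:ℝ) / ((n:ℝ) - 2) ≤ 1 := by
        refine le_trans hle ?_
        rw [div_le_one hβ1']; linarith
      have hfv : (2:ℝ) / ((n:ℝ) - 2) * v 2 ≤ v 2 := by
        have := hv 2
        nlinarith
      have h6 : 6 * (n:ℝ)^2 / (β^2 * 2^2) ≤ 6 * (n:ℝ)^2 / β^2 := by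
        apply div_le_div_of_nonneg_left (by positivity) (by positivity)
        nlinarith
      have key : (n:ℝ)^2 * (1 + 2*((2:ℝ)+1)/β^2) = (n:ℝ)^2 + 6*(n:ℝ)^2/β^2 := by
        ring
      rw [key]
      linarith
    | succ k hk ih =>
      intro hK
      have hkK : k ≤ K - 1 := by omega
      have ihv := ih hkK
      have hr := hrec (k+1) (by omega) hK
      obtain ⟨hpos, hle⟩ := hfrac (k+1) (by omega) hK
      push_cast at hr hle hpos ⊢
      have hkr : (2:ℝ) ≤ (k:ℝ) := by exact_mod_cast hk
      have hf1 : ((k:ℝ)+1) / ((n:ℝ) - ((k:ℝ)+1)) ≤ 1 := by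
        refine le_trans hle ?_
        rw [div_le_one hβ1']; linarith
      have hfv : ((k:ℝ)+1) / ((n:ℝ) - ((k:ℝ)+1)) * v (k+1) ≤ v (k+1) := by
        have := hv (k+1)
        nlinarith
      have h6 : 6 * (n:ℝ)^2 / (β^2 * ((k:ℝ)+1)^2) ≤ 2 * (n:ℝ)^2 / β^2 := by
        have h9 : (9:ℝ) ≤ ((k:ℝ)+1)^2 := by nlinarith
        rw [div_le_div_iff₀ (by positivity) (by positivity)]
        nlinarith [mul_le_mul_of_nonneg_left h9 (show (0:ℝ) ≤ 2*(n:ℝ)^2*β^2 by positivity)]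
      have key : (n:ℝ)^2 * (1 + 2*((k:ℝ)+1+1)/β^2)
          = (n:ℝ)^2 * (1 + 2*((k:ℝ)+1)/β^2) + 2*(n:ℝ)^2/β^2 := by
        ring
      rw [key]
      linarith
  -- the small-index case
  have hsmall : ∀ k : ℕ, 2 ≤ k → k ≤ K - 1 → k + 1 ≤ k0 →
      v (k+1) ≤ c * (n:ℝ)^2 / (k:ℝ)^2 := by
    intro k hk2 hkK hkk0
    have h1 := haux k hk2 hkK
    have hkk0r : (k:ℝ) + 1 ≤ (k0:ℝ) := by exact_mod_cast hkk0
    have hk2r : (2:ℝ) ≤ (k:ℝ) := by exact_mod_cast hk2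
    have hP : (0:ℝ) ≤ 1 + 2*(k0:ℝ)/β^2 := by positivity
    have hkpos2 : (0:ℝ) < (k:ℝ)^2 := by nlinarith
    have h2' : v (k+1) ≤ (n:ℝ)^2 * (1 + 2*(k0:ℝ)/β^2) := by
      refine le_trans h1 ?_
      gcongr
    have h3 : (n:ℝ)^2 * (1 + 2*(k0:ℝ)/β^2) ≤ (k0:ℝ)^2 * (1 + 2*(k0:ℝ)/β^2) * (n:ℝ)^2 / (k:ℝ)^2 := by
      rw [le_div_iff₀ hkpos2]
      have hkk : (k:ℝ)^2 ≤ (k0:ℝ)^2 := by nlinarith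
      nlinarith [mul_le_mul_of_nonneg_right hkk (mul_nonneg hP hn2)]
    have h4 : (k0:ℝ)^2 * (1 + 2*(k0:ℝ)/β^2) * (n:ℝ)^2 / (k:ℝ)^2 ≤ c * (n:ℝ)^2 / (k:ℝ)^2 := by
      rw [div_le_div_iff₀ hkpos2 hkpos2]
      nlinarith [mul_le_mul_of_nonneg_right hc1 hn2, hkpos2]
    linarith
  -- main induction
  intro k hk2
  induction k, hk2 using Nat.le_induction with
  | base =>
    intro hK
    exact hsmall 2 le_rfl hK (by omega)
  | succ k hk ih =>
    intro hK
    by_cases hcase : k + 2 ≤ k0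
    · exact hsmall (k+1) (by omega) hK (by omega)
    · -- large index case
      have hkK : k ≤ K - 1 := by omega
      have ihv := ih hkK
      have hr := hrec (k+1) (by omega) hK
      obtain ⟨hpos, hle⟩ := hfrac (k+1) (by omega) hK
      push_cast at hr hle hpos ⊢
      have hk2r : (2:ℝ) ≤ (k:ℝ) := by exact_mod_cast hk
      -- k ≥ k0 - 1 ≥ ⌈3/β⌉ + 1 so β * k ≥ 3
      have hkceil : (⌈(3:ℝ)/β⌉₊ : ℝ) ≤ (k:ℝ) := by
        have : ⌈(3:ℝ)/β⌉₊ ≤ k := by omega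
        exact_mod_cast this
      have hβk : (3:ℝ) ≤ β * (k:ℝ) := by
        have h1 : (3:ℝ)/β ≤ (k:ℝ) := le_trans (Nat.le_ceil _) hkceil
        rw [div_le_iff₀ hβ0] at h1
        linarith [h1]
      have hρ0 : (0:ℝ) ≤ (1-β)/(1+β) := by
        apply div_nonneg <;> linarith
      have hv1 := hv (k+1)
      -- chain: v(k+2) ≤ ρ * (c n²/k²) + 6n²/(β²(k+1)²)
      have step1 : ((k:ℝ)+1) / ((n:ℝ) - ((k:ℝ)+1)) * v (k+1)
          ≤ (1-β)/(1+β) * (c * (n:ℝ)^2 / (k:ℝ)^2) := by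
        calc ((k:ℝ)+1) / ((n:ℝ) - ((k:ℝ)+1)) * v (k+1)
            ≤ (1-β)/(1+β) * v (k+1) := mul_le_mul_of_nonneg_right hle hv1
          _ ≤ (1-β)/(1+β) * (c * (n:ℝ)^2 / (k:ℝ)^2) := mul_le_mul_of_nonneg_left ihv hρ0
      -- key polynomial inequality
      have hkey : (1-β) * ((k:ℝ)+1)^2 ≤ (k:ℝ)^2 := by
        nlinarith [mul_le_mul_of_nonneg_right hβk (by linarith : (0:ℝ) ≤ (k:ℝ))]
      have ha : (1-β)/(1+β) * (c * (n:ℝ)^2 / (k:ℝ)^2)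
          ≤ (1/(1+β)) * (c * (n:ℝ)^2 / ((k:ℝ)+1)^2) := by
        have hkpos2 : (0:ℝ) < (k:ℝ)^2 := by nlinarith
        have e1 : (1-β)/(1+β) * (c * (n:ℝ)^2 / (k:ℝ)^2)
            = ((1-β) * (c * (n:ℝ)^2)) / ((1+β) * (k:ℝ)^2) := div_mul_div_comm _ _ _ _
        have e2 : (1/(1+β)) * (c * (n:ℝ)^2 / ((k:ℝ)+1)^2)
            = (c * (n:ℝ)^2) / ((1+β) * ((k:ℝ)+1)^2) := by
          rw [div_mul_div_comm, one_mul]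
        have hd1 : (0:ℝ) < (1+β) * (k:ℝ)^2 := mul_pos hβ1' hkpos2
        have hd2 : (0:ℝ) < (1+β) * ((k:ℝ)+1)^2 := mul_pos hβ1' (by positivity)
        rw [e1, e2, div_le_div_iff₀ hd1 hd2]
        nlinarith [mul_le_mul_of_nonneg_left hkey (mul_nonneg (mul_nonneg hc0 hn2) hβ1'.le)]
      have hb : 6 * (n:ℝ)^2 / (β^2 * ((k:ℝ)+1)^2) ≤ δ * (c * (n:ℝ)^2 / ((k:ℝ)+1)^2) := by
        have e1 : (6/β^2) * ((n:ℝ)^2 / ((k:ℝ)+1)^2) = 6 * (n:ℝ)^2 / (β^2 * ((k:ℝ)+1)^2) :=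
          div_mul_div_comm _ _ _ _
        have e2 : δ * (c * (n:ℝ)^2 / ((k:ℝ)+1)^2) = (δ*c) * ((n:ℝ)^2 / ((k:ℝ)+1)^2) := by
          rw [mul_div_assoc, ← mul_assoc]
        rw [← e1, e2]
        exact mul_le_mul_of_nonneg_right hc2 (by positivity)
      have hsum : (1/(1+β)) * (c * (n:ℝ)^2 / ((k:ℝ)+1)^2) + δ * (c * (n:ℝ)^2 / ((k:ℝ)+1)^2)
          = c * (n:ℝ)^2 / ((k:ℝ)+1)^2 := by
        have hone : (1:ℝ)/(1+β) + δ = 1 := by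
          rw [hδdef, ← add_div, div_self hβ1'.ne']
        calc (1/(1+β)) * (c * (n:ℝ)^2 / ((k:ℝ)+1)^2) + δ * (c * (n:ℝ)^2 / ((k:ℝ)+1)^2)
            = ((1/(1+β)) + δ) * (c * (n:ℝ)^2 / ((k:ℝ)+1)^2) := by ring
          _ = c * (n:ℝ)^2 / ((k:ℝ)+1)^2 := by rw [hone, one_mul]
      linarith
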